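/- Let G be an r-regular graph on n vertices and m edges with line graph L(G). Then φ(T₂(G) : μ) = μ^{n−m} · ∏_{i=1}^m ( μ² − (6r−4)/(3r) − (√((4r−2)/(4r))·μ + (3r−2)/(3r))·θ_i ), where θ_1,…,θ_m are the adjacency eigenvalues of L(G). -/

import Mathlib

open Matrix Polynomial

/-- The atom-bond sum-connectivity (ABS) matrix of a simple graph. -/
noncomputable def absMatrix {V : Type*} [Fintype V] [DecidableEq V]
    (G : SimpleGraph V) [DecidableRel G.Adj] : Matrix V V ℝ :=
  Matrix.of fun i j => if G.Adj i j then
    Real.sqrt (1 - 2 / ((G.degree i : ℝ) + (G.degree j : ℝ))) else 0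

/-- The semitotal line graph `T₂(G)`: vertices are `V(G) ∪ E(G)`; two vertices are adjacent
if they are adjacent edges of `G`, or one is a vertex incident to the other (an edge). -/
def semitotalLineGraph {V : Type*} (G : SimpleGraph V) : SimpleGraph (V ⊕ G.edgeSet) where
  Adj x y := match x, y with
    | Sum.inl _, Sum.inl _ => False
    | Sum.inl v, Sum.inr e => v ∈ (e : Sym2 V)
    | Sum.inr e, Sum.inl v => v ∈ (e : Sym2 V)
    | Sum.inr e, Sum.inr f => e ≠ f ∧ ∃ v, v ∈ (e : Sym2 V) ∧ v ∈ (f : Sym2 V)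
  symm := ⟨by
    rintro (v | e) (w | f) h <;> simp_all
    · obtain ⟨h1, v, hv⟩ := h
      exact ⟨Ne.symm h1, v, hv.2, hv.1⟩⟩
  loopless := ⟨by rintro (v | e) h <;> simp_all⟩

set_option linter.unusedSectionVars false

open Finset

section Aux
variable {V : Type*} [Fintype V] [DecidableEq V] (G : SimpleGraph V) [DecidableRel G.Adj]

private lemma eval_charpoly' {ι : Type*} [Fintype ι] [DecidableEq ι] (M : Matrix ι ι ℝ) (μ : ℝ) :
    M.charpoly.eval μ = (μ • (1 : Matrix ι ι ℝ) - M).det := by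
  rw [Matrix.charpoly, ← Polynomial.coe_evalRingHom, RingHom.map_det]
  congr 1
  ext i j
  by_cases h : i = j <;>
    simp [Matrix.charmatrix_apply, h, Matrix.one_apply, Matrix.diagonal_apply,
      RingHom.mapMatrix_apply, Matrix.map_apply]

private lemma card_filter_mem_edge (v : V) :
    (Finset.univ.filter (fun e : G.edgeSet => v ∈ (e : Sym2 V))).card = G.degree v := by
  rw [← Fintype.card_subtype, ← G.card_incidenceSet_eq_degree v]
  exact Fintype.card_congr ⟨fun ⟨⟨s, hs⟩, hv⟩ => ⟨s, hs, hv⟩, fun ⟨s, hs, hv⟩ => ⟨⟨s, hs⟩, hv⟩,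
    fun ⟨⟨s, hs⟩, hv⟩ => rfl, fun ⟨s, hs, hv⟩ => rfl⟩

private lemma stlg_adj_inl_inr (v : V) (e : G.edgeSet) :
    (semitotalLineGraph G).Adj (Sum.inl v) (Sum.inr e) ↔ v ∈ (e : Sym2 V) := Iff.rfl

private lemma stlg_adj_inr_inl (v : V) (e : G.edgeSet) :
    (semitotalLineGraph G).Adj (Sum.inr e) (Sum.inl v) ↔ v ∈ (e : Sym2 V) := Iff.rfl

private lemma stlg_adj_inr_inr (e f : G.edgeSet) :
    (semitotalLineGraph G).Adj (Sum.inr e) (Sum.inr f) ↔ (G.lineGraph).Adj e f := by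
  rw [SimpleGraph.lineGraph_adj_iff_exists]; rfl

private lemma stlg_adj_inl_inl (v w : V) :
    ¬ (semitotalLineGraph G).Adj (Sum.inl v) (Sum.inl w) := fun h => h

private lemma degree_inl [DecidableRel (semitotalLineGraph G).Adj] (v : V) :
    (semitotalLineGraph G).degree (Sum.inl v) = G.degree v := by
  have h : (semitotalLineGraph G).neighborFinset (Sum.inl v) =
      (Finset.univ.filter (fun e : G.edgeSet => v ∈ (e : Sym2 V))).map
        ⟨Sum.inr, Sum.inr_injective⟩ := by
    ext y
    cases y with
    | inl w => simp [SimpleGraph.mem_neighborFinset, stlg_adj_inl_inl]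
    | inr e => simp [SimpleGraph.mem_neighborFinset, stlg_adj_inl_inr]
  rw [SimpleGraph.degree, h, Finset.card_map, card_filter_mem_edge]

end Aux

section Aux2
variable {V : Type*} [Fintype V] [DecidableEq V] (G : SimpleGraph V) [DecidableRel G.Adj]

private lemma degree_inr [DecidableRel (semitotalLineGraph G).Adj] {r : ℕ} (hr : 1 ≤ r)
    (hreg : G.IsRegularOfDegree r) (e : G.edgeSet) :
    (semitotalLineGraph G).degree (Sum.inr e) = 2 * r := by
  obtain ⟨s, hs⟩ := e
  induction s using Sym2.ind with
  | _ u w =>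
  have huw : u ≠ w := (G.mem_edgeSet.mp hs).ne
  set e : G.edgeSet := ⟨s(u, w), hs⟩ with he
  rw [← SimpleGraph.card_neighborSet_eq_degree]
  have hcard : Fintype.card ((semitotalLineGraph G).neighborSet (Sum.inr e)) =
      Fintype.card {v : V // (semitotalLineGraph G).Adj (Sum.inr e) (Sum.inl v)} +
      Fintype.card {f : G.edgeSet // (semitotalLineGraph G).Adj (Sum.inr e) (Sum.inr f)} := by
    rw [← Fintype.card_sum]
    exact Fintype.card_congr Equiv.subtypeSum
  rw [hcard]
  -- vertex part
  have h1 : Fintype.card {v : V // (semitotalLineGraph G).Adj (Sum.inr e) (Sum.inl v)} = 2 := by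
    rw [Fintype.card_subtype]
    have : (Finset.univ.filter fun v : V => (semitotalLineGraph G).Adj (Sum.inr e) (Sum.inl v))
        = {u, w} := by
      ext x
      simp [stlg_adj_inr_inl, he, Sym2.mem_iff]
    rw [this, Finset.card_pair huw]
  -- edge part
  have h2 : Fintype.card {f : G.edgeSet // (semitotalLineGraph G).Adj (Sum.inr e) (Sum.inr f)}
      = 2 * r - 2 := by
    rw [Fintype.card_subtype]
    set Su := Finset.univ.filter (fun f : G.edgeSet => u ∈ (f : Sym2 V)) with hSu
    set Sw := Finset.univ.filter (fun f : G.edgeSet => w ∈ (f : Sym2 V)) with hSw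
    have hT : (Finset.univ.filter fun f : G.edgeSet =>
        (semitotalLineGraph G).Adj (Sum.inr e) (Sum.inr f)) = (Su ∪ Sw).erase e := by
      ext f
      simp only [Finset.mem_filter, Finset.mem_univ, true_and, Finset.mem_erase,
        Finset.mem_union, hSu, hSw, stlg_adj_inr_inr, SimpleGraph.lineGraph_adj_iff_exists]
      constructor
      · rintro ⟨hne, x, hxe, hxf⟩
        refine ⟨Ne.symm hne, ?_⟩
        rcases Sym2.mem_iff.mp hxe with rfl | rfl
        · exact Or.inl hxf
        · exact Or.inr hxf
      · rintro ⟨hne, h | h⟩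
        · exact ⟨Ne.symm hne, u, by simp [he], h⟩
        · exact ⟨Ne.symm hne, w, by simp [he], h⟩
    rw [hT]
    have hSuc : Su.card = r := by rw [hSu, card_filter_mem_edge, hreg u]
    have hSwc : Sw.card = r := by rw [hSw, card_filter_mem_edge, hreg w]
    have hinter : Su ∩ Sw = {e} := by
      ext f
      simp only [Finset.mem_inter, Finset.mem_singleton, hSu, hSw, Finset.mem_filter,
        Finset.mem_univ, true_and]
      constructor
      · rintro ⟨hu, hw⟩
        exact Subtype.ext (Sym2.eq_of_ne_mem huw hu hw (by simp [he]) (by simp [he]))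
      · rintro rfl
        simp [he]
    have hmem : e ∈ Su ∪ Sw := Finset.mem_union_left _ (by simp [hSu, he])
    have := Finset.card_union_add_card_inter Su Sw
    rw [hinter, hSuc, hSwc, Finset.card_singleton] at this
    rw [Finset.card_erase_of_mem hmem]
    omega
  rw [h1, h2]; omega

end Aux2

section Aux3
variable {V : Type*} [Fintype V] [DecidableEq V] (G : SimpleGraph V) [DecidableRel G.Adj]

private lemma card_common [DecidableRel (SimpleGraph.lineGraph G).Adj] (e f : G.edgeSet) :
    (Finset.univ.filter fun v : V => v ∈ (e : Sym2 V) ∧ v ∈ (f : Sym2 V)).card =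
      if e = f then 2 else if (G.lineGraph).Adj e f then 1 else 0 := by
  by_cases hef : e = f
  · subst hef
    rw [if_pos rfl]
    obtain ⟨s, hs⟩ := e
    induction s using Sym2.ind with
    | _ u w =>
    have huw : u ≠ w := (G.mem_edgeSet.mp hs).ne
    have : (Finset.univ.filter fun v : V =>
        v ∈ ((⟨s(u, w), hs⟩ : G.edgeSet) : Sym2 V) ∧ v ∈ ((⟨s(u, w), hs⟩ : G.edgeSet) : Sym2 V))
        = {u, w} := by
      ext x
      simp [Sym2.mem_iff]
    rw [this, Finset.card_pair huw]
  · rw [if_neg hef]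
    by_cases hadj : (G.lineGraph).Adj e f
    · rw [if_pos hadj]
      obtain ⟨-, v₀, hv₀e, hv₀f⟩ := SimpleGraph.lineGraph_adj_iff_exists.mp hadj
      have : (Finset.univ.filter fun v : V => v ∈ (e : Sym2 V) ∧ v ∈ (f : Sym2 V)) = {v₀} := by
        ext x
        simp only [Finset.mem_filter, Finset.mem_univ, true_and, Finset.mem_singleton]
        constructor
        · rintro ⟨hxe, hxf⟩
          by_contra hne
          exact hef (Subtype.ext (Sym2.eq_of_ne_mem hne hxe hv₀e hxf hv₀f))
        · rintro rfl
          exact ⟨hv₀e, hv₀f⟩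
      rw [this, Finset.card_singleton]
    · rw [if_neg hadj]
      rw [Finset.card_eq_zero, Finset.filter_eq_empty_iff]
      intro x _
      rintro ⟨hxe, hxf⟩
      exact hadj (SimpleGraph.lineGraph_adj_iff_exists.mpr ⟨hef, x, hxe, hxf⟩)

end Aux3


section Aux4
variable {V : Type*} [Fintype V] [DecidableEq V] (G : SimpleGraph V) [DecidableRel G.Adj]

noncomputable def incMat : Matrix G.edgeSet V ℝ :=
  Matrix.of fun e v => if v ∈ (e : Sym2 V) then 1 else 0

private lemma incMat_mul_transpose [DecidableRel (SimpleGraph.lineGraph G).Adj] :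
    incMat G * (incMat G)ᵀ = (2 : ℝ) • 1 + (G.lineGraph).adjMatrix ℝ := by
  ext e f
  rw [Matrix.mul_apply]
  have h1 : ∀ v : V, incMat G e v * (incMat G)ᵀ v f =
      if v ∈ (e : Sym2 V) ∧ v ∈ (f : Sym2 V) then (1 : ℝ) else 0 := by
    intro v
    simp only [incMat, Matrix.transpose_apply, Matrix.of_apply]
    by_cases hv1 : v ∈ (e : Sym2 V) <;> by_cases hv2 : v ∈ (f : Sym2 V) <;> simp [hv1, hv2]
  rw [Finset.sum_congr rfl (fun v _ => h1 v), Finset.sum_boole, card_common]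
  by_cases hef : e = f
  · subst hef
    simp [Matrix.one_apply, SimpleGraph.irrefl]
  · by_cases hadj : (G.lineGraph).Adj e f <;>
      simp [hef, hadj, Matrix.one_apply]

private lemma key_block [DecidableRel (semitotalLineGraph G).Adj]
    [DecidableRel (SimpleGraph.lineGraph G).Adj] {r : ℕ} (hr : 1 ≤ r)
    (hreg : G.IsRegularOfDegree r) (μ aa bb : ℝ)
    (haa : Real.sqrt (1 - 2 / (((2 * r : ℕ) : ℝ) + ((2 * r : ℕ) : ℝ))) = aa)
    (hbb : Real.sqrt (1 - 2 / (((r : ℕ) : ℝ) + ((2 * r : ℕ) : ℝ))) = bb) :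
    μ • (1 : Matrix (V ⊕ G.edgeSet) (V ⊕ G.edgeSet) ℝ) - absMatrix (semitotalLineGraph G) =
      Matrix.fromBlocks (μ • 1) (-(bb • (incMat G)ᵀ)) (-(bb • incMat G))
        (μ • 1 - aa • (G.lineGraph).adjMatrix ℝ) := by
  ext i j
  cases i with
  | inl v =>
    cases j with
    | inl w =>
      simp [absMatrix, stlg_adj_inl_inl, Matrix.one_apply, Sum.inl.injEq]
    | inr e =>
      simp only [Matrix.sub_apply, Matrix.smul_apply, Matrix.one_apply, absMatrix,
        Matrix.of_apply, Matrix.fromBlocks_apply₁₂, Matrix.neg_apply, Matrix.transpose_apply,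
        reduceCtorEq, if_false, smul_eq_mul, mul_zero, zero_sub, incMat]
      by_cases hv : v ∈ (e : Sym2 V)
      · rw [if_pos ((stlg_adj_inl_inr G v e).mpr hv), if_pos hv, degree_inl,
          degree_inr G hr hreg, hreg v, hbb, mul_one]
      · rw [if_neg (fun h => hv ((stlg_adj_inl_inr G v e).mp h)), if_neg hv, mul_zero, neg_zero]
  | inr e =>
    cases j with
    | inl v =>
      simp only [Matrix.sub_apply, Matrix.smul_apply, Matrix.one_apply, absMatrix,
        Matrix.of_apply, Matrix.fromBlocks_apply₂₁, Matrix.neg_apply,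
        reduceCtorEq, if_false, smul_eq_mul, mul_zero, zero_sub, incMat]
      rw [show (((r : ℕ) : ℝ) + ((2 * r : ℕ) : ℝ)) = (((2 * r : ℕ) : ℝ) + ((r : ℕ) : ℝ)) by ring]
        at hbb
      by_cases hv : v ∈ (e : Sym2 V)
      · rw [if_pos ((stlg_adj_inr_inl G v e).mpr hv), if_pos hv, degree_inl,
          degree_inr G hr hreg, hreg v, hbb, mul_one]
      · rw [if_neg (fun h => hv ((stlg_adj_inr_inl G v e).mp h)), if_neg hv, mul_zero, neg_zero]
    | inr f =>
      simp only [Matrix.sub_apply, Matrix.smul_apply, Matrix.one_apply, absMatrix,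
        Matrix.of_apply, Matrix.fromBlocks_apply₂₂, Sum.inr.injEq, smul_eq_mul,
        SimpleGraph.adjMatrix_apply]
      congr 1
      by_cases hadj : (G.lineGraph).Adj e f
      · rw [if_pos ((stlg_adj_inr_inr G e f).mpr hadj), if_pos hadj, degree_inr G hr hreg,
          degree_inr G hr hreg, haa, mul_one]
      · rw [if_neg (fun h => hadj ((stlg_adj_inr_inr G e f).mp h)), if_neg hadj, mul_zero]

end Aux4


/-- For an `r`-regular graph `G` on `n` vertices and `m` edges whose line graph `L(G)` has
adjacency eigenvalues `θ_1, …, θ_m`,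
`φ(T₂(G) : μ) = μ^{n−m} ∏ᵢ (μ² − (6r−4)/(3r) − (√((4r−2)/(4r))μ + (3r−2)/(3r))θᵢ)`,
stated multiplied through by `μ^m` so that only natural exponents occur. -/
theorem abs_charpoly_semitotal_line {V : Type*} [Fintype V] [DecidableEq V]
    (G : SimpleGraph V) [DecidableRel G.Adj] [DecidableRel (semitotalLineGraph G).Adj]
    [DecidableRel (SimpleGraph.lineGraph G).Adj]
    (r : ℕ) (hr : 1 ≤ r) (hreg : G.IsRegularOfDegree r)
    (n m : ℕ) (hn : n = Fintype.card V) (hm : m = G.edgeFinset.card)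
    (theta : Fin m → ℝ)
    (htheta : ((SimpleGraph.lineGraph G).adjMatrix ℝ).charpoly =
      ∏ i : Fin m, (X - C (theta i))) :
    X ^ m * (absMatrix (semitotalLineGraph G)).charpoly =
      X ^ n * ∏ i : Fin m,
        (X ^ 2 - C ((6 * (r : ℝ) - 4) / (3 * (r : ℝ))) -
          (C (Real.sqrt ((4 * (r : ℝ) - 2) / (4 * (r : ℝ)))) * X +
            C ((3 * (r : ℝ) - 2) / (3 * (r : ℝ)))) * C (theta i)) := by
  classical
  have hr1 : (1 : ℝ) ≤ (r : ℝ) := by exact_mod_cast hr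
  have hrne : (r : ℝ) ≠ 0 := by linarith
  set aa : ℝ := Real.sqrt ((4 * (r : ℝ) - 2) / (4 * (r : ℝ))) with haa_def
  set b2 : ℝ := (3 * (r : ℝ) - 2) / (3 * (r : ℝ)) with hb2_def
  set bb : ℝ := Real.sqrt b2 with hbb_def
  have hbb2 : bb ^ 2 = b2 := Real.sq_sqrt (by rw [hb2_def]; exact div_nonneg (by linarith) (by linarith))
  have haa0 : 0 < aa := Real.sqrt_pos.mpr (div_pos (by linarith) (by linarith))
  have haa' : Real.sqrt (1 - 2 / (((2 * r : ℕ) : ℝ) + ((2 * r : ℕ) : ℝ))) = aa := by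
    rw [haa_def]; congr 1; push_cast; field_simp; ring
  have hbb' : Real.sqrt (1 - 2 / (((r : ℕ) : ℝ) + ((2 * r : ℕ) : ℝ))) = bb := by
    rw [hbb_def, hb2_def]; congr 1; push_cast; field_simp; ring
  have hcardE : Fintype.card G.edgeSet = m := by rw [hm, SimpleGraph.edgeFinset_card]
  have hcardV : Fintype.card V = n := hn.symm
  have h64 : (6 * (r : ℝ) - 4) / (3 * (r : ℝ)) = 2 * bb ^ 2 := by rw [hbb2, hb2_def]; ring
  rw [h64]
  set A := (G.lineGraph).adjMatrix ℝ with hA_def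
  set B := incMat G with hB_def
  set M := absMatrix (semitotalLineGraph G) with hM_def
  apply Polynomial.eq_of_infinite_eval_eq
  have hfin : ({(0 : ℝ), -(b2 / aa)} : Set ℝ).Finite :=
    Set.Finite.insert _ (Set.finite_singleton _)
  refine (Set.Finite.infinite_compl hfin).mono fun μ hμ => ?_
  simp only [Set.mem_compl_iff, Set.mem_insert_iff, Set.mem_singleton_iff, not_or] at hμ
  obtain ⟨hμ0, hμ1⟩ := hμ
  have hy : aa * μ + bb ^ 2 ≠ 0 := by
    rw [hbb2]
    intro h
    apply hμ1
    have haane : aa ≠ 0 := ne_of_gt haa0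
    field_simp
    linarith
  show Polynomial.eval μ _ = Polynomial.eval μ _
  -- invertibility of the top-left block
  haveI : Invertible (μ • (1 : Matrix V V ℝ)) :=
    ⟨μ⁻¹ • 1,
      by rw [Matrix.smul_mul, Matrix.mul_smul, smul_smul, inv_mul_cancel₀ hμ0, one_smul,
        Matrix.one_mul],
      by rw [Matrix.smul_mul, Matrix.mul_smul, smul_smul, mul_inv_cancel₀ hμ0, one_smul,
        Matrix.one_mul]⟩
  have hinvOf : ⅟(μ • (1 : Matrix V V ℝ)) = μ⁻¹ • 1 :=
    invOf_eq_right_inv (by rw [Matrix.smul_mul, Matrix.mul_smul, smul_smul,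
      mul_inv_cancel₀ hμ0, one_smul, Matrix.one_mul])
  have hprod : (-(bb • B)) * ⅟(μ • (1 : Matrix V V ℝ)) * (-(bb • Bᵀ)) =
      (bb ^ 2 * μ⁻¹) • ((2 : ℝ) • 1 + A) := by
    rw [hinvOf, hB_def, ← incMat_mul_transpose G]
    simp only [Matrix.neg_mul, Matrix.mul_neg, neg_neg, Matrix.smul_mul, Matrix.mul_smul,
      smul_smul, Matrix.mul_one, smul_neg]
    congr 1
    ring
  set N : Matrix G.edgeSet G.edgeSet ℝ :=
    μ • 1 - aa • A - (bb ^ 2 * μ⁻¹) • ((2 : ℝ) • 1 + A) with hN_def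
  have hμN : μ • N = (μ ^ 2 - 2 * bb ^ 2) • 1 - (aa * μ + bb ^ 2) • A := by
    rw [hN_def]
    ext i j
    simp only [Matrix.smul_apply, Matrix.sub_apply, Matrix.add_apply, Matrix.one_apply,
      smul_eq_mul]
    split_ifs <;> field_simp <;> ring
  -- determinant chain
  have hdet : (μ • (1 : Matrix (V ⊕ G.edgeSet) (V ⊕ G.edgeSet) ℝ) - M).det = μ ^ n * N.det := by
    rw [hM_def, key_block G hr hreg μ aa bb haa' hbb', Matrix.det_fromBlocks₁₁]
    congr 1
    · rw [Matrix.det_smul, Matrix.det_one, mul_one, hcardV]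
    · rw [hprod, hN_def]
  -- factor the small determinant
  set x : ℝ := μ ^ 2 - 2 * bb ^ 2 with hx_def
  set y : ℝ := aa * μ + bb ^ 2 with hy_def
  have hfactor : x • (1 : Matrix G.edgeSet G.edgeSet ℝ) - y • A = y • ((x / y) • 1 - A) := by
    rw [smul_sub, smul_smul, mul_comm y (x / y), div_mul_cancel₀ x hy]
  have hNdet : μ ^ m * N.det = ∏ i : Fin m, (x - y * theta i) := by
    rw [show μ ^ m * N.det = (μ • N).det from by rw [Matrix.det_smul, hcardE],
      hμN, hfactor, Matrix.det_smul, ← eval_charpoly', hA_def, htheta, hcardE]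
    rw [Polynomial.eval_prod]
    simp only [Polynomial.eval_sub, Polynomial.eval_X, Polynomial.eval_C]
    rw [show y ^ m = ∏ _i : Fin m, y by
      rw [Finset.prod_const, Finset.card_univ, Fintype.card_fin], ← Finset.prod_mul_distrib]
    exact Finset.prod_congr rfl fun i _ => by
      rw [mul_sub, mul_comm y (x / y), div_mul_cancel₀ x hy]
  -- put it together
  simp only [Polynomial.eval_mul, Polynomial.eval_pow, Polynomial.eval_X, Polynomial.eval_prod,
    Polynomial.eval_sub, Polynomial.eval_add, Polynomial.eval_C]
  rw [eval_charpoly', hdet]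
  calc μ ^ m * (μ ^ n * N.det) = μ ^ n * (μ ^ m * N.det) := by ring
    _ = μ ^ n * ∏ i : Fin m, (x - y * theta i) := by rw [hNdet]
    _ = _ := by
        congr 1
        exact Finset.prod_congr rfl fun i _ => by rw [hx_def, hy_def, hbb2]
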